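/- A morphism f : P → Q of finite poc-sets is surjective if and only if its dual map f° : Γ(Q) → Γ(P), v ↦ f⁻¹(v), is injective. -/

import Mathlib

structure PocSet (P : Type*) [PartialOrder P] where
  zero : P
  zero_le : ∀ a : P, zero ≤ a
  star : P → P
  star_star : ∀ a : P, star (star a) = a
  star_anti : ∀ a b : P, a ≤ b → star b ≤ star a
  eq_zero_of_le_star : ∀ a : P, a ≤ star a → a = zero

namespace PocSet

variable {P : Type*} [PartialOrder P]

/-- The maximum element `1 = 0*` of a poc-set. -/
def one (S : PocSet P) : P := S.star S.zero

/-- An element is proper if it is neither `0` nor `1`. -/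
def Proper (S : PocSet P) (a : P) : Prop := a ≠ S.zero ∧ a ≠ S.one

/-- A subset is coherent if `a ≤ b*` holds for no two of its members. -/
def Coherent (S : PocSet P) (α : Set P) : Prop := ∀ a ∈ α, ∀ b ∈ α, ¬ a ≤ S.star b

/-- A vertex of `Γ(P)`: a coherent `*`-selection. -/
def IsVertex (S : PocSet P) (α : Set P) : Prop :=
  S.Coherent α ∧ ∀ a : P, a ∈ α ↔ S.star a ∉ α

/-- The metric `Δ(u,v) = |u Δ v| / 2` on vertices. -/
noncomputable def delta (S : PocSet P) (u v : Set P) : ℝ :=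
  ((symmDiff u v).ncard : ℝ) / 2

/-- The median of three sets. -/
def med (u v w : Set P) : Set P := (u ∩ v) ∪ (v ∩ w) ∪ (u ∩ w)

section Aux

variable (T : PocSet P)

lemma le_one (a : P) : a ≤ T.one := by
  have h := T.star_anti _ _ (T.zero_le (T.star a))
  rwa [T.star_star] at h

lemma le_of_le_star {a b : P} (h : a ≤ T.star b) : b ≤ T.star a := by
  have h2 := T.star_anti _ _ h
  rw [T.star_star] at h2
  exact h2

lemma zero_not_mem {α : Set P} (hα : T.Coherent α) (h : T.zero ∈ α) : False :=
  hα _ h _ h (T.zero_le _)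

lemma star_eq_zero {a : P} (h : T.star a = T.zero) : a = T.one := by
  have := congrArg T.star h
  rwa [T.star_star] at this

lemma star_ne_self {a : P} (ha : a ≠ T.zero) : T.star a ≠ a := by
  intro h
  exact ha (T.eq_zero_of_le_star a (le_of_eq h.symm))

/-- Key dichotomy: if inserting `a` breaks coherence, then `a = 0` or some member lies below `a*`. -/
lemma insert_incoherent {α : Set P} (hα : T.Coherent α) {a : P}
    (h : ¬ T.Coherent (insert a α)) : a = T.zero ∨ ∃ b ∈ α, b ≤ T.star a := by
  simp only [Coherent, not_forall] at h
  obtain ⟨x, hx, y, hy, hxy⟩ := h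
  rw [not_not] at hxy
  rcases hx with rfl | hx
  · rcases hy with rfl | hy
    · exact Or.inl (T.eq_zero_of_le_star _ hxy)
    · exact Or.inr ⟨y, hy, T.le_of_le_star hxy⟩
  · rcases hy with rfl | hy
    · exact Or.inr ⟨x, hx, hxy⟩
    · exact absurd hxy (hα _ hx _ hy)

lemma coherent_insert_or {α : Set P} (hα : T.Coherent α) (h01 : T.zero ≠ T.one) (a : P) :
    T.Coherent (insert a α) ∨ T.Coherent (insert (T.star a) α) := by
  by_contra h
  push_neg at h
  obtain ⟨h1, h2⟩ := h
  rcases T.insert_incoherent hα h1 with rfl | ⟨b, hb, hb'⟩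
  · rcases T.insert_incoherent hα h2 with h0 | ⟨c, hc, hc'⟩
    · exact h01 (T.star_eq_zero h0)
    · rw [T.star_star] at hc'
      have : c = T.zero := le_antisymm hc' (T.zero_le c)
      exact T.zero_not_mem hα (this ▸ hc)
  · rcases T.insert_incoherent hα h2 with h0 | ⟨c, hc, hc'⟩
    · have : b = T.zero := le_antisymm (h0 ▸ hb') (T.zero_le b)
      exact T.zero_not_mem hα (this ▸ hb)
    · rw [T.star_star] at hc'
      exact hα _ hc _ hb (hc'.trans (T.le_of_le_star hb'))

lemma exists_vertex_extend [Finite P] (h01 : T.zero ≠ T.one) :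
    ∀ n : ℕ, ∀ α : Set P, T.Coherent α → {a | a ∉ α ∧ T.star a ∉ α}.ncard ≤ n →
      ∃ v, T.IsVertex v ∧ α ⊆ v := by
  intro n
  induction n with
  | zero =>
    intro α hα hcard
    have hempty : {a | a ∉ α ∧ T.star a ∉ α} = ∅ := by
      rw [← Set.ncard_eq_zero (Set.toFinite _)]
      omega
    refine ⟨α, ⟨hα, fun a => ?_⟩, subset_rfl⟩
    constructor
    · intro ha hsa
      exact hα _ ha _ hsa (le_of_eq (T.star_star a).symm)
    · intro hsa
      by_contra ha
      exact (Set.eq_empty_iff_forall_notMem.mp hempty a) ⟨ha, hsa⟩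
  | succ n ih =>
    intro α hα hcard
    by_cases hne : {a | a ∉ α ∧ T.star a ∉ α}.Nonempty
    · obtain ⟨a, ha, hsa⟩ := hne
      have key : ∀ b : P, T.star b = a ∨ True → T.Coherent (insert b α) →
          b ∉ α → T.star b ∉ α →
          ∃ v, T.IsVertex v ∧ α ⊆ v := by
        intro b _ hcoh hb hsb
        have hsub : {x | x ∉ insert b α ∧ T.star x ∉ insert b α} ⊆
            {x | x ∉ α ∧ T.star x ∉ α} \ {b} := by
          intro x hx
          obtain ⟨hx, hsx⟩ : x ∉ insert b α ∧ T.star x ∉ insert b α := hx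
          refine ⟨⟨fun h => hx (Set.mem_insert_of_mem _ h),
            fun h => hsx (Set.mem_insert_of_mem _ h)⟩, ?_⟩
          intro h
          exact hx (h ▸ Set.mem_insert _ _)
        have hlt : ({x | x ∉ insert b α ∧ T.star x ∉ insert b α}).ncard ≤ n := by
          have h1 := Set.ncard_le_ncard hsub (Set.toFinite _)
          have h2 : ({x | x ∉ α ∧ T.star x ∉ α} \ {b}).ncard <
              {x | x ∉ α ∧ T.star x ∉ α}.ncard := by
            exact Set.ncard_diff_singleton_lt_of_mem
              (show b ∈ {x | x ∉ α ∧ T.star x ∉ α} from ⟨hb, hsb⟩) (Set.toFinite _)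
          omega
        obtain ⟨v, hv, hv2⟩ := ih (insert b α) hcoh hlt
        exact ⟨v, hv, (Set.subset_insert _ _).trans hv2⟩
      rcases T.coherent_insert_or hα h01 a with h | h
      · exact key a (Or.inr trivial) h ha hsa
      · refine key (T.star a) (Or.inr trivial) h hsa ?_
        rwa [T.star_star]
    · rw [Set.not_nonempty_iff_eq_empty] at hne
      refine ⟨α, ⟨hα, fun a => ?_⟩, subset_rfl⟩
      constructor
      · intro ha hsa
        exact hα _ ha _ hsa (le_of_eq (T.star_star a).symm)
      · intro hsa
        by_contra ha
        exact (Set.eq_empty_iff_forall_notMem.mp hne a) ⟨ha, hsa⟩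

/-- Flipping a minimal proper element of a vertex yields a vertex. -/
lemma flip_vertex {v : Set P} (hv : T.IsVertex v) {b : P} (hb : b ∈ v)
    (hb1 : b ≠ T.one) (hmin : ∀ a ∈ v, a ≤ b → a = b) :
    T.IsVertex (insert (T.star b) (v \ {b})) := by
  obtain ⟨hcoh, hsel⟩ := hv
  have hb0 : b ≠ T.zero := fun h => T.zero_not_mem hcoh (h ▸ hb)
  have hsbb : ¬ T.star b ≤ b := by
    intro h
    have := T.eq_zero_of_le_star (T.star b) (by rwa [T.star_star])
    exact hb1 (T.star_eq_zero this)
  constructor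
  · rintro x (rfl | ⟨hx, hx'⟩) y (rfl | ⟨hy, hy'⟩)
    · intro h
      exact hsbb (by rwa [T.star_star] at h)
    · intro h
      have : y ≤ b := by
        have := T.le_of_le_star h
        rwa [T.star_star] at this
      exact hy' (hmin _ hy this)
    · rw [T.star_star]
      intro h
      exact hx' (hmin _ hx h)
    · exact hcoh _ hx _ hy
  · intro a
    constructor
    · rintro (rfl | ⟨ha, hane⟩) h2
      · rw [T.star_star] at h2
        rcases h2 with h2 | ⟨_, h2⟩
        · exact (T.star_ne_self hb0) h2.symm
        · exact h2 rfl
      · rcases h2 with h2 | ⟨h2, _⟩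
        · refine hane ?_
          have := congrArg T.star h2
          rw [T.star_star, T.star_star] at this
          exact this
        · exact (hsel a).mp ha h2
    · intro h
      by_cases hasb : a = T.star b
      · exact Or.inl hasb
      · have hsab : T.star a ≠ b := fun h2 => hasb (by rw [← h2, T.star_star])
        refine Or.inr ⟨(hsel a).mpr (fun h2 => h (Or.inr ⟨h2, hsab⟩)), ?_⟩
        rintro rfl
        exact h (Or.inl rfl)

lemma exists_vertex_min [Finite P] {q : P} (hq : T.Proper q) :
    ∃ v, T.IsVertex v ∧ q ∈ v ∧ ∀ a ∈ v, a ≤ q → a = q := by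
  have h01 : T.zero ≠ T.one := by
    intro h
    exact hq.1 (le_antisymm (h ▸ T.le_one q) (T.zero_le q))
  have hcohq : T.Coherent {q} := by
    rintro x rfl y rfl h
    exact hq.1 (T.eq_zero_of_le_star _ h)
  obtain ⟨v0, hv0, hv0q⟩ := T.exists_vertex_extend h01
    ({a | a ∉ ({q} : Set P) ∧ T.star a ∉ ({q} : Set P)}.ncard) {q} hcohq le_rfl
  have hq0 : q ∈ v0 := hv0q rfl
  -- strong induction on the number of strict lower elements in the vertex
  suffices h : ∀ n : ℕ, ∀ v, T.IsVertex v → q ∈ v → {a ∈ v | a ≤ q ∧ a ≠ q}.ncard ≤ n →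
      ∃ v', T.IsVertex v' ∧ q ∈ v' ∧ ∀ a ∈ v', a ≤ q → a = q by
    exact h _ v0 hv0 hq0 le_rfl
  intro n
  induction n with
  | zero =>
    intro v hv hqv hcard
    refine ⟨v, hv, hqv, fun a ha hle => ?_⟩
    by_contra hne
    have : {a ∈ v | a ≤ q ∧ a ≠ q} = ∅ := by
      rw [← Set.ncard_eq_zero (Set.toFinite _)]; omega
    exact (Set.eq_empty_iff_forall_notMem.mp this a) ⟨ha, hle, hne⟩
  | succ n ih =>
    intro v hv hqv hcard
    by_cases hne : {a ∈ v | a ≤ q ∧ a ≠ q}.Nonempty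
    · -- pick a minimal element of this set
      obtain ⟨b, hbmem, hbmin⟩ : ∃ b ∈ {a ∈ v | a ≤ q ∧ a ≠ q},
          ∀ a ∈ {a ∈ v | a ≤ q ∧ a ≠ q}, a ≤ b → b = a := by
        obtain ⟨b, hb⟩ := (Set.toFinite {a ∈ v | a ≤ q ∧ a ≠ q}).exists_minimal hne
        exact ⟨b, hb.1, fun a ha hle => le_antisymm (hb.2 ha hle) hle⟩
      obtain ⟨hbv, hbq, hbne⟩ := hbmem
      have hminv : ∀ a ∈ v, a ≤ b → a = b := by
        intro a ha hle
        by_contra hane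
        have haq : a ≠ q := by
          rintro rfl
          exact hbne (le_antisymm hbq hle)
        exact hane (hbmin a ⟨ha, hle.trans hbq, haq⟩ hle).symm
      have hb1 : b ≠ T.one := by
        intro h
        exact hq.2 (le_antisymm (T.le_one q) (h ▸ hbq))
      have hflip := T.flip_vertex hv hbv hb1 hminv
      have hq' : q ∈ insert (T.star b) (v \ {b}) :=
        Or.inr ⟨hqv, fun h => hbne (Set.mem_singleton_iff.mp h).symm⟩
      have hsub : {a ∈ insert (T.star b) (v \ {b}) | a ≤ q ∧ a ≠ q} ⊆
          {a ∈ v | a ≤ q ∧ a ≠ q} \ {b} := by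
        rintro x ⟨(rfl | ⟨hx, hx'⟩), hle, hne'⟩
        · exfalso
          -- star b ≤ q and b ≤ q impossible
          have h1 : T.star q ≤ b := by
            have := T.star_anti _ _ hle
            rwa [T.star_star] at this
          have h2 : T.star q ≤ T.star (T.star q) := by
            rw [T.star_star]; exact h1.trans hbq
          have := T.eq_zero_of_le_star _ h2
          exact hq.2 (T.star_eq_zero this)
        · exact ⟨⟨hx, hle, hne'⟩, hx'⟩
      have hlt : {a ∈ insert (T.star b) (v \ {b}) | a ≤ q ∧ a ≠ q}.ncard ≤ n := by
        have h1 := Set.ncard_le_ncard hsub (Set.toFinite _)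
        have h2 := Set.ncard_diff_singleton_lt_of_mem
          (s := {a ∈ v | a ≤ q ∧ a ≠ q}) ⟨hbv, hbq, hbne⟩ (Set.toFinite _)
        omega
      exact ih _ hflip hq' hlt
    · rw [Set.not_nonempty_iff_eq_empty] at hne
      refine ⟨v, hv, hqv, fun a ha hle => ?_⟩
      by_contra hane
      exact (Set.eq_empty_iff_forall_notMem.mp hne a) ⟨ha, hle, hane⟩


end Aux

end PocSet

/-- A morphism of poc-sets: sends `0` to `0`, preserves order, commutes with `*`. -/
def IsPocMorphism {P Q : Type*} [PartialOrder P] [PartialOrder Q]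
    (S : PocSet P) (T : PocSet Q) (f : P → Q) : Prop :=
  f S.zero = T.zero ∧ (∀ a b : P, a ≤ b → f a ≤ f b) ∧ ∀ a : P, f (S.star a) = T.star (f a)

theorem stmt11 {P Q : Type*} [PartialOrder P] [PartialOrder Q] [Finite P] [Finite Q]
    (S : PocSet P) (T : PocSet Q) (f : P → Q) (hf : IsPocMorphism S T f) :
    Function.Surjective f ↔
      Set.InjOn (fun v : Set Q => f ⁻¹' v) {v : Set Q | T.IsVertex v} := by
  obtain ⟨hf0, hfmono, hfstar⟩ := hf
  constructor
  · intro hsurj v _ w _ h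
    simp only at h
    ext q
    obtain ⟨p, rfl⟩ := hsurj q
    constructor
    · intro hq
      have : p ∈ f ⁻¹' v := hq
      rw [h] at this
      exact this
    · intro hq
      have : p ∈ f ⁻¹' w := hq
      rw [← h] at this
      exact this
  · intro hinj q
    by_contra hq
    push_neg at hq
    -- q is proper
    have hq0 : q ≠ T.zero := fun h => hq S.zero (h ▸ hf0)
    have hq1 : q ≠ T.one := by
      intro h
      exact hq (S.star S.zero) (by rw [hfstar, hf0]; exact h.symm)
    have hqsr : ∀ p : P, f p ≠ T.star q := by
      intro p h
      apply hq (S.star p)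
      rw [hfstar, h, T.star_star]
    obtain ⟨v, hv, hqv, hqmin⟩ := T.exists_vertex_min ⟨hq0, hq1⟩
    have hflip := T.flip_vertex hv hqv hq1 hqmin
    set w := insert (T.star q) (v \ {q}) with hw
    have hpre : f ⁻¹' v = f ⁻¹' w := by
      ext p
      simp only [Set.mem_preimage, hw, Set.mem_insert_iff, Set.mem_diff,
        Set.mem_singleton_iff]
      constructor
      · intro h
        exact Or.inr ⟨h, fun h2 => hq p h2⟩
      · rintro (h | ⟨h, _⟩)
        · exact absurd h (hqsr p)
        · exact h
    have : v = w := hinj hv hflip hpre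
    rw [this] at hqv
    rcases hqv with h | ⟨_, h⟩
    · exact (T.star_ne_self hq0) h.symm
    · exact h rfl
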